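/- arXiv:1603.05134 — 9 statements merged into one kernel-verified Lean document; each statement's English description precedes it below -/
import Mathlib

section
/- For any integers x and y with 1 ≤ x < y, there exist a positive integer f and an odd positive integer q such that (q-1)·2^(f-1) < x ≤ q·2^(f-1) < y ≤ (q+1)·2^(f-1). -/
theorem stmt_0 (x y : ℤ) (hx : 1 ≤ x) (hxy : x < y) :
    ∃ f q : ℕ, 0 < f ∧ 0 < q ∧ Odd q ∧
      ((q : ℤ) - 1) * 2 ^ (f - 1) < x ∧ x ≤ (q : ℤ) * 2 ^ (f - 1) ∧
      (q : ℤ) * 2 ^ (f - 1) < y ∧ y ≤ ((q : ℤ) + 1) * 2 ^ (f - 1) := by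
  classical
  set P : ℕ → Prop := fun v => ∀ k : ℤ, ¬(x ≤ k * 2 ^ v ∧ k * 2 ^ v < y) with hPdef
  have hex : ∃ v, P v := by
    obtain ⟨v, hv⟩ := pow_unbounded_of_one_lt (y : ℤ) (by norm_num : (1:ℤ) < 2)
    refine ⟨v, fun k ⟨h1, h2⟩ => ?_⟩
    have hpow : (0:ℤ) < 2 ^ v := pow_pos (by norm_num) v
    have hk1 : 1 ≤ k := by nlinarith
    nlinarith
  let v0 := Nat.find hex
  have hP : P v0 := Nat.find_spec hex
  have h0 : ¬ P 0 := by
    intro h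
    exact h x ⟨by simpa using le_refl x, by simpa using hxy⟩
  have hv0pos : 0 < v0 := by
    rcases Nat.eq_zero_or_pos v0 with h | h
    · exact absurd (h ▸ hP) h0
    · exact h
  set v := v0 - 1 with hv
  have hvv : v0 = v + 1 := by omega
  have hnotP : ¬ P v := Nat.find_min hex (by omega)
  have hpow : (0:ℤ) < 2 ^ v := pow_pos (by norm_num) v
  have hsucc : (2:ℤ) ^ v0 = 2 * 2 ^ v := by rw [hvv, pow_succ]; ring
  simp only [hPdef] at hnotP
  push_neg at hnotP
  obtain ⟨k, hk1, hk2⟩ := hnotP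
  have hk1' : 1 ≤ k := by nlinarith
  have hodd : Odd k := by
    rcases Int.even_or_odd k with he | ho
    · obtain ⟨j, hj⟩ := he
      exfalso
      refine hP j ⟨?_, ?_⟩ <;> rw [hsucc] <;> nlinarith
    · exact ho
  refine ⟨v0, k.toNat, hv0pos, ?_, ?_, ?_, ?_, ?_, ?_⟩
  · omega
  · rw [← Int.odd_coe_nat, Int.toNat_of_nonneg (by omega : (0:ℤ) ≤ k)]; exact hodd
  all_goals rw [show v0 - 1 = v from rfl, Int.toNat_of_nonneg (by omega : (0:ℤ) ≤ k)]
  · by_contra h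
    push_neg at h
    obtain ⟨j, hj⟩ : Even (k - 1) := by
      rcases hodd with ⟨m, hm⟩; exact ⟨m, by omega⟩
    refine hP j ⟨?_, ?_⟩ <;> rw [hsucc] <;> nlinarith
  · exact hk1
  · exact hk2
  · by_contra h
    push_neg at h
    obtain ⟨j, hj⟩ : Even (k + 1) := by
      rcases hodd with ⟨m, hm⟩; exact ⟨m + 1, by omega⟩
    refine hP j ⟨?_, ?_⟩ <;> rw [hsucc] <;> nlinarith
end

section
/- For any integers x and y with 1 ≤ x < y, the pair (f, q) with f a positive integer, q an odd positive integer, and (q-1)·2^(f-1) < x ≤ q·2^(f-1) < y ≤ (q+1)·2^(f-1) is uniquely determined by x and y. -/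
lemma aux_1 (x y : ℤ) (f q f' q' : ℕ)
    (hf : 0 < f) (hq : 0 < q) (hqo : Odd q)
    (hf' : 0 < f') (hle : f ≤ f')
    (h1 : ((q : ℤ) - 1) * 2 ^ (f - 1) < x)
    (h3 : (q : ℤ) * 2 ^ (f - 1) < y) (h4 : y ≤ ((q : ℤ) + 1) * 2 ^ (f - 1))
    (h2' : x ≤ (q' : ℤ) * 2 ^ (f' - 1))
    (h3' : (q' : ℤ) * 2 ^ (f' - 1) < y) :
    f = f' ∧ q = q' := by
  set e := f - 1 with he
  set e' := f' - 1 with he'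
  have hd : e' = e + (e' - e) := by omega
  set d := e' - e with hdd
  have hpow : (2:ℤ) ^ e' = 2 ^ d * 2 ^ e := by
    rw [hd]; ring
  set k : ℤ := (q' : ℤ) * 2 ^ d with hk
  have hke : (q' : ℤ) * 2 ^ e' = k * 2 ^ e := by
    rw [hpow, hk]; ring
  rw [hke] at h2' h3'
  -- (q-1) * 2^e < k * 2^e < (q+1) * 2^e
  have hlt1 : ((q:ℤ) - 1) * 2 ^ e < k * 2 ^ e := lt_of_lt_of_le h1 h2'
  have hlt2 : k * 2 ^ e < ((q:ℤ) + 1) * 2 ^ e := lt_of_lt_of_le h3' h4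
  have hp : (0:ℤ) < 2 ^ e := by positivity
  have hk1 : (q:ℤ) - 1 < k := lt_of_mul_lt_mul_right hlt1 hp.le
  have hk2 : k < (q:ℤ) + 1 := lt_of_mul_lt_mul_right hlt2 hp.le
  have hkq : k = (q:ℤ) := by omega
  have hd0 : d = 0 := by
    by_contra hd0
    have : (2:ℤ) ∣ k := ⟨(q':ℤ) * 2 ^ (d-1), by
      rw [hk]
      have : (2:ℤ)^d = 2 * 2^(d-1) := by
        rw [← pow_succ']; congr 1; omega
      rw [this]; ring⟩
    rw [hkq] at this
    have : (2:ℕ) ∣ q := by exact_mod_cast this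
    have := Nat.odd_iff.mp hqo
    omega
  constructor
  · omega
  · have : k = (q':ℤ) := by rw [hk, hd0]; ring
    exact_mod_cast (this ▸ hkq).symm

theorem stmt_1 (x y : ℤ) (hx : 1 ≤ x) (hxy : x < y) (f q f' q' : ℕ)
    (hf : 0 < f) (hq : 0 < q) (hqo : Odd q)
    (hf' : 0 < f') (hq' : 0 < q') (hqo' : Odd q')
    (h1 : ((q : ℤ) - 1) * 2 ^ (f - 1) < x) (h2 : x ≤ (q : ℤ) * 2 ^ (f - 1))
    (h3 : (q : ℤ) * 2 ^ (f - 1) < y) (h4 : y ≤ ((q : ℤ) + 1) * 2 ^ (f - 1))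
    (h1' : ((q' : ℤ) - 1) * 2 ^ (f' - 1) < x) (h2' : x ≤ (q' : ℤ) * 2 ^ (f' - 1))
    (h3' : (q' : ℤ) * 2 ^ (f' - 1) < y) (h4' : y ≤ ((q' : ℤ) + 1) * 2 ^ (f' - 1)) :
    f = f' ∧ q = q' := by
  rcases le_total f f' with h | h
  · exact aux_1 x y f q f' q' hf hq hqo hf' h h1 h3 h4 h2' h3'
  · obtain ⟨a, b⟩ := aux_1 x y f' q' f q hf' hq' hqo' hf h h1' h3' h4' h2 h3
    exact ⟨a.symm, b.symm⟩
end

section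
/- For any three positive integers x, y, z with x < y ≤ z, the inequality f(x, y) ≤ f(x, z) holds, where for integers a < b, f(a, b) denotes the unique positive integer f for which there exists an odd positive integer q with (q-1)·2^(f-1) < a ≤ q·2^(f-1) < b ≤ (q+1)·2^(f-1). -/
/-- `IsFQ x y f q` says that `f` is a positive integer and `q` an odd positive
integer with `(q-1)·2^(f-1) < x ≤ q·2^(f-1) < y ≤ (q+1)·2^(f-1)`; for `1 ≤ x < y`
such a pair `(f, q)` exists and is unique, so it defines `f(x,y)` and `q(x,y)`. -/
def IsFQ (x y f q : ℕ) : Prop :=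
  0 < f ∧ 0 < q ∧ Odd q ∧
    (q - 1) * 2 ^ (f - 1) < x ∧ x ≤ q * 2 ^ (f - 1) ∧
    q * 2 ^ (f - 1) < y ∧ y ≤ (q + 1) * 2 ^ (f - 1)

theorem stmt_2 (x y z f₁ q₁ f₂ q₂ : ℕ) (hx : 0 < x) (hxy : x < y) (hyz : y ≤ z)
    (h₁ : IsFQ x y f₁ q₁) (h₂ : IsFQ x z f₂ q₂) :
    f₁ ≤ f₂ := by
  by_contra h
  push_neg at h
  obtain ⟨hf₁, hq₁, hodd₁, hx₁, hx₁', hy₁, hy₁'⟩ := h₁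
  obtain ⟨hf₂, hq₂, hodd₂, hx₂, hx₂', hz₂, hz₂'⟩ := h₂
  -- f₁ - 1 = (f₂ - 1) + 1 + d
  have hd : f₁ - 1 = (f₂ - 1) + 1 + (f₁ - 1 - f₂) := by omega
  set k := q₁ * 2 ^ (f₁ - 1 - f₂) with hk
  have hm : q₁ * 2 ^ (f₁ - 1) = (2 * k) * 2 ^ (f₂ - 1) := by
    rw [hd, pow_add, pow_add, hk]; ring
  -- (q₂ - 1) * 2^(f₂-1) < x ≤ m₁ < y ≤ z ≤ (q₂+1) * 2^(f₂-1)
  have h1 : (q₂ - 1) * 2 ^ (f₂ - 1) < (2 * k) * 2 ^ (f₂ - 1) := by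
    rw [← hm]; exact lt_of_lt_of_le hx₂ hx₁'
  have h2 : (2 * k) * 2 ^ (f₂ - 1) < (q₂ + 1) * 2 ^ (f₂ - 1) := by
    rw [← hm]; exact lt_of_lt_of_le hy₁ (le_trans hyz hz₂')
  have hpos : 0 < 2 ^ (f₂ - 1) := Nat.pow_pos (by norm_num)
  have e1 : q₂ - 1 < 2 * k := Nat.lt_of_mul_lt_mul_right h1
  have e2 : 2 * k < q₂ + 1 := Nat.lt_of_mul_lt_mul_right h2
  have : q₂ = 2 * k := by omega
  rw [Nat.odd_iff] at hodd₂
  omega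
end

section
/- For any positive integers x < y ≤ z with f(x, y) = f(x, z), we also have q(x, y) = q(x, z), and consequently, writing f for the common value of f(x,y) and f(x,z) and q for the common value of q(x,y) and q(x,z), the chain (q-1)·2^(f-1) < x ≤ q·2^(f-1) < y ≤ z ≤ (q+1)·2^(f-1) holds. -/
theorem stmt_3 (x y z f q₁ q₂ : ℕ) (hx : 0 < x) (hxy : x < y) (hyz : y ≤ z)
    (h₁ : IsFQ x y f q₁) (h₂ : IsFQ x z f q₂) :
    q₁ = q₂ ∧
      (q₁ - 1) * 2 ^ (f - 1) < x ∧ x ≤ q₁ * 2 ^ (f - 1) ∧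
      q₁ * 2 ^ (f - 1) < y ∧ y ≤ z ∧ z ≤ (q₁ + 1) * 2 ^ (f - 1) := by
  obtain ⟨hf, hq1, _, a1, a2, a3, a4⟩ := h₁
  obtain ⟨_, hq2, _, b1, b2, b3, b4⟩ := h₂
  set m := 2 ^ (f - 1) with hm
  have hmpos : 0 < m := Nat.pow_pos (by norm_num)
  have hq : q₁ = q₂ := by
    rcases lt_trichotomy q₁ q₂ with h | h | h
    · have : q₁ * m ≤ (q₂ - 1) * m := Nat.mul_le_mul_right m (by omega)
      omega
    · exact h
    · have : q₂ * m ≤ (q₁ - 1) * m := Nat.mul_le_mul_right m (by omega)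
      omega
  subst hq
  exact ⟨rfl, a1, a2, a3, hyz, b4⟩
end

section
/- If four positive integers t, x, y, z satisfy t ≤ x < y ≤ z and f(x, y) = f(x, z), then f(t, y) = f(t, z). -/
lemma q1_pos_mul {a b f q : ℕ} (h : IsFQ a b f q) : 0 < q * 2 ^ (f - 1) :=
  Nat.mul_pos h.2.1 (Nat.pow_pos (by norm_num))

/-- No positive multiple of `2^f` lies in `[a, b)`. -/
lemma noMul_isFQ {a b f q : ℕ} (h : IsFQ a b f q) {m : ℕ} (hm : 0 < m)
    (hd : 2 ^ f ∣ m) (ha : a ≤ m) : b ≤ m := by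
  obtain ⟨hf, hq, hodd, h1, h2, h3, h4⟩ := h
  obtain ⟨c, rfl⟩ := hd
  have hf' : f = (f - 1) + 1 := by omega
  have hm' : 2 ^ f * c = (2 * c) * 2 ^ (f - 1) := by
    calc 2 ^ f * c = 2 ^ (f - 1 + 1) * c := by rw [Nat.sub_add_cancel hf]
      _ = (2 * c) * 2 ^ (f - 1) := by rw [pow_succ]; ring
  rw [hm'] at ha hm ⊢
  have hpow : 0 < 2 ^ (f - 1) := Nat.pow_pos (by norm_num)
  have hq1 : q - 1 < 2 * c := by
    have : (q - 1) * 2 ^ (f - 1) < (2 * c) * 2 ^ (f - 1) := lt_of_lt_of_le h1 ha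
    exact Nat.lt_of_mul_lt_mul_right this
  have hne : q ≠ 2 * c := by
    intro hEq
    exact (Nat.not_odd_iff_even.mpr ⟨c, by omega⟩) (hEq ▸ hodd)
  have : q + 1 ≤ 2 * c := by omega
  calc b ≤ (q + 1) * 2 ^ (f - 1) := h4
    _ ≤ (2 * c) * 2 ^ (f - 1) := Nat.mul_le_mul_right _ this

/-- If a positive multiple of `2^k` lies in `[a, b)` and `IsFQ a b g p`, then `k < g`. -/
lemma lt_of_dvd_isFQ {a b g p k : ℕ} (h : IsFQ a b g p) {m : ℕ} (hm : 0 < m)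
    (hd : 2 ^ k ∣ m) (ha : a ≤ m) (hb : m < b) : k < g := by
  by_contra hk
  push_neg at hk
  have : 2 ^ g ∣ m := dvd_trans (pow_dvd_pow 2 hk) hd
  exact absurd (noMul_isFQ h hm this ha) (by omega)

theorem stmt_4 (t x y z : ℕ) (ht : 0 < t) (htx : t ≤ x) (hxy : x < y) (hyz : y ≤ z)
    (f q₁ q₂ g₁ p₁ g₂ p₂ : ℕ)
    (hxyf : IsFQ x y f q₁) (hxzf : IsFQ x z f q₂)
    (hty : IsFQ t y g₁ p₁) (htz : IsFQ t z g₂ p₂) :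
    g₁ = g₂ := by
  -- f ≤ g₁ not needed directly; key facts:
  have h1 : f - 1 < g₁ := lt_of_dvd_isFQ hty (q1_pos_mul hxyf)
    (dvd_mul_left _ _) (le_trans htx hxyf.2.2.2.2.1) hxyf.2.2.2.2.2.1
  have hfg : f ≤ g₁ := by omega
  have h2 : g₁ - 1 < g₂ := lt_of_dvd_isFQ htz (q1_pos_mul hty)
    (dvd_mul_left _ _) hty.2.2.2.2.1 (lt_of_lt_of_le hty.2.2.2.2.2.1 hyz)
  by_contra hne
  have hg12 : g₁ < g₂ := by omega
  -- m3 := p₂ * 2^(g₂-1) is a positive multiple of 2^f in [x, z), contradiction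
  set m3 := p₂ * 2 ^ (g₂ - 1) with hm3
  have hm3pos : 0 < m3 := q1_pos_mul htz
  have hdvd : 2 ^ f ∣ m3 := dvd_mul_of_dvd_right (pow_dvd_pow 2 (by omega)) _
  have hm3y : y ≤ m3 := by
    by_contra hlt
    push_neg at hlt
    have := lt_of_dvd_isFQ hty hm3pos (dvd_mul_of_dvd_right
      (pow_dvd_pow 2 (le_refl _)) _) htz.2.2.2.2.1 hlt
    omega
  have := noMul_isFQ hxzf hm3pos hdvd (le_trans (le_of_lt hxy) hm3y)
  have hm3z : m3 < z := htz.2.2.2.2.2.1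
  omega
end

section
/- For any integers x and y with 1 ≤ x < y ≤ 2^n, we have f(x, y) ∈ [1, n], f(2^n + 1 - y, 2^n + 1 - x) = f(x, y), and q(2^n + 1 - y, 2^n + 1 - x) = 2^(n+1-f) - q(x, y), where f = f(x, y). -/
private lemma isFQ_unique_aux {x y f q g p : ℕ} (hfg : f ≤ g)
    (h1 : IsFQ x y f q) (h2 : IsFQ x y g p) : f = g ∧ q = p := by
  obtain ⟨hf, hq, hqo, h11, h12, h13, h14⟩ := h1
  obtain ⟨hg, hp, hpo, h21, h22, h23, h24⟩ := h2
  have hE : p * 2 ^ (g - 1) = (p * 2 ^ (g - f)) * 2 ^ (f - 1) := by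
    rw [mul_assoc, ← pow_add]
    congr 2
    omega
  set k := p * 2 ^ (g - f) with hk
  have hlt1 : (q - 1) * 2 ^ (f - 1) < k * 2 ^ (f - 1) := by
    rw [← hE]; exact lt_of_lt_of_le h11 h22
  have hlt2 : k * 2 ^ (f - 1) < (q + 1) * 2 ^ (f - 1) := by
    rw [← hE]; exact lt_of_lt_of_le h23 h14
  have h2pos : 0 < 2 ^ (f - 1) := Nat.pow_pos (by norm_num)
  have hk1 : q - 1 < k := Nat.lt_of_mul_lt_mul_right hlt1
  have hk2 : k < q + 1 := Nat.lt_of_mul_lt_mul_right hlt2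
  have hkq : k = q := by omega
  have hfg' : f = g := by
    by_contra hne
    have : 0 < g - f := by omega
    have heven : Even k := by
      rw [hk]
      exact (Nat.even_pow.2 ⟨even_two, by omega⟩).mul_left p
    rw [hkq] at heven
    exact (Nat.not_even_iff_odd.2 hqo) heven
  subst hfg'
  have : p * 2 ^ (f - f) = p := by simp
  rw [this] at hk
  omega

lemma isFQ_unique {x y f q g p : ℕ}
    (h1 : IsFQ x y f q) (h2 : IsFQ x y g p) : f = g ∧ q = p := by
  rcases le_total f g with hfg | hfg
  · exact isFQ_unique_aux hfg h1 h2
  · obtain ⟨a, b⟩ := isFQ_unique_aux hfg h2 h1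
    exact ⟨a.symm, b.symm⟩

theorem stmt_5 (n x y f q f' q' : ℕ) (hn : 0 < n)
    (hx : 1 ≤ x) (hxy : x < y) (hy : y ≤ 2 ^ n)
    (h : IsFQ x y f q)
    (h' : IsFQ (2 ^ n + 1 - y) (2 ^ n + 1 - x) f' q') :
    1 ≤ f ∧ f ≤ n ∧ f' = f ∧ q' = 2 ^ (n + 1 - f) - q := by
  obtain ⟨hf, hq, hqo, h11, h12, h13, h14⟩ := h
  -- f ≤ n
  have h2pos : 0 < 2 ^ (f - 1) := Nat.pow_pos (by norm_num)
  have hfn : f ≤ n := by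
    have h1 : 2 ^ (f - 1) ≤ q * 2 ^ (f - 1) := Nat.le_mul_of_pos_left _ hq
    have h2 : (2 : ℕ) ^ (f - 1) < 2 ^ n := lt_of_le_of_lt h1 (lt_of_lt_of_le h13 hy)
    have := (Nat.pow_lt_pow_iff_right (a := 2) (by norm_num)).1 h2
    omega
  set a := 2 ^ (f - 1) with ha
  set b := 2 ^ (n + 1 - f) with hb
  have hba : b * a = 2 ^ n := by
    rw [ha, hb, ← pow_add]
    congr 1
    omega
  have hbev : Even b := by
    rw [hb]
    exact Nat.even_pow.2 ⟨even_two, by omega⟩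
  have hqb : q < b := by
    have : q * a < b * a := by rw [hba]; exact lt_of_lt_of_le h13 hy
    exact Nat.lt_of_mul_lt_mul_right this
  have hQodd : Odd (b - q) := by
    obtain ⟨m, hm⟩ := hbev
    obtain ⟨k, hk⟩ := hqo
    exact ⟨m - k - 1, by omega⟩
  -- key arithmetic facts as atoms for omega
  have e1 : (q - 1) * a = q * a - a := by rw [Nat.sub_mul, one_mul]
  have e2 : (q + 1) * a = q * a + a := by rw [Nat.add_mul, one_mul]
  have e3 : a ≤ q * a := Nat.le_mul_of_pos_left _ hq
  have e4 : q * a + a ≤ b * a := by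
    have : (q + 1) * a ≤ b * a := Nat.mul_le_mul_right _ (by omega)
    rwa [e2] at this
  have hIs : IsFQ (2 ^ n + 1 - y) (2 ^ n + 1 - x) f (b - q) := by
    refine ⟨hf, by omega, hQodd, ?_, ?_, ?_, ?_⟩
    · have : (b - q - 1) * a = b * a - q * a - a := by
        rw [Nat.sub_mul, Nat.sub_mul, one_mul]
      rw [← ha, this, hba]
      omega
    · have : (b - q) * a = b * a - q * a := Nat.sub_mul _ _ _
      rw [← ha, this, hba]
      omega
    · have : (b - q) * a = b * a - q * a := Nat.sub_mul _ _ _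
      rw [← ha, this, hba]
      omega
    · have : (b - q + 1) * a = b * a - q * a + a := by
        rw [Nat.add_mul, Nat.sub_mul, one_mul]
      rw [← ha, this, hba]
      omega
  obtain ⟨hff, hqq⟩ := isFQ_unique h' hIs
  exact ⟨hf, hfn, hff, by rw [hqq, hb]⟩
end

section
/- The chromatic number of the graph G_2(2^k) is at most 2k - 1 for every positive integer k. -/
/-- Vertex set of `G₂(n)`: triples `(x, y, z)` with `1 ≤ x ≤ y ≤ z ≤ n` and `x < z`. -/
def V2 (n : ℕ) :=
  {p : ℕ × ℕ × ℕ // 1 ≤ p.1 ∧ p.1 ≤ p.2.1 ∧ p.2.1 ≤ p.2.2 ∧ p.2.2 ≤ n ∧ p.1 < p.2.2}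

/-- `rel2 (x,y,z) (x',y',z')` holds iff `x < x' ≤ z < z'`, `y ≤ x'` and `z ≤ y'`. -/
def rel2 (p q : ℕ × ℕ × ℕ) : Prop :=
  p.1 < q.1 ∧ q.1 ≤ p.2.2 ∧ p.2.2 < q.2.2 ∧ p.2.1 ≤ q.1 ∧ p.2.2 ≤ q.2.1

/-- The graph `G₂(n)`. -/
def G2 (n : ℕ) : SimpleGraph (V2 n) where
  Adj a b := rel2 a.1 b.1 ∨ rel2 b.1 a.1
  symm := ⟨fun a b h => h.symm⟩
  loopless := ⟨fun a h => by rcases h with h | h <;> exact lt_irrefl _ h.1⟩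

/-- 2-adic valuation. -/
def nu2 (s : ℕ) : ℕ := s.factorization 2

/-- Max valuation over `[a, b]`. -/
def Mv (a b : ℕ) : ℕ := (Finset.Icc a b).sup nu2

/-- The (unique) point of `[a,b]` of maximal valuation. -/
def Tv (a b : ℕ) : ℕ :=
  WithBot.unbotD 0 (((Finset.Icc a b).filter (fun s => nu2 s = Mv a b)).max)

lemma nu2_le_of_mem {a b s : ℕ} (hs : s ∈ Finset.Icc a b) : nu2 s ≤ Mv a b :=
  Finset.le_sup hs

lemma pow_nu2_dvd (s : ℕ) : 2 ^ nu2 s ∣ s := Nat.ordProj_dvd s 2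

lemma not_pow_succ_nu2_dvd {s : ℕ} (hs : 0 < s) : ¬ 2 ^ (nu2 s + 1) ∣ s := by
  intro h
  have h' : nu2 s + 1 ≤ nu2 s :=
    (Nat.Prime.pow_dvd_iff_le_factorization Nat.prime_two (by omega)).mp h
  omega

lemma nu2_pos_of_even {s : ℕ} (hs : 0 < s) (h2 : 2 ∣ s) : 1 ≤ nu2 s :=
  (Nat.Prime.dvd_iff_one_le_factorization Nat.prime_two (by omega)).mp h2

lemma odd_of_nu2_zero {s : ℕ} (hs : 0 < s) (h : nu2 s = 0) : s % 2 = 1 := by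
  by_contra hh
  have h2 : 2 ∣ s := Nat.dvd_of_mod_eq_zero (by omega)
  have := nu2_pos_of_even hs h2
  omega

lemma Tv_spec {a b : ℕ} (h : a ≤ b) :
    Tv a b ∈ Finset.Icc a b ∧ nu2 (Tv a b) = Mv a b := by
  have hne : (Finset.Icc a b).Nonempty := Finset.nonempty_Icc.mpr h
  obtain ⟨i, hi, hsup⟩ := Finset.exists_mem_eq_sup (Finset.Icc a b) hne nu2
  have hF : ((Finset.Icc a b).filter (fun s => nu2 s = Mv a b)).Nonempty :=
    ⟨i, Finset.mem_filter.mpr ⟨hi, hsup.symm⟩⟩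
  have hTv : Tv a b = ((Finset.Icc a b).filter (fun s => nu2 s = Mv a b)).max' hF := by
    rw [Tv, ← Finset.coe_max' hF, WithBot.unbotD_coe]
  have hmem := Finset.max'_mem _ hF
  rw [← hTv] at hmem
  have := Finset.mem_filter.mp hmem
  exact ⟨this.1, this.2⟩

lemma between {m s s' : ℕ} (hs : 0 < s) (hlt : s < s')
    (h1 : 2 ^ m ∣ s) (h2 : ¬ 2 ^ (m + 1) ∣ s)
    (h3 : 2 ^ m ∣ s') (h4 : ¬ 2 ^ (m + 1) ∣ s') :
    ∃ c, s < c ∧ c ≤ s' ∧ 2 ^ (m + 1) ∣ c := by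
  obtain ⟨u, hu⟩ := h1
  obtain ⟨u', hu'⟩ := h3
  have hpow : 0 < 2 ^ m := Nat.pow_pos (n := m) (by norm_num)
  have hps : (2 : ℕ) ^ (m + 1) = 2 ^ m * 2 := pow_succ 2 m
  have hu_odd : u % 2 = 1 := by
    by_contra hh
    have h0 : u % 2 = 0 := by omega
    obtain ⟨v, hv⟩ := Nat.dvd_of_mod_eq_zero h0
    exact h2 ⟨v, by rw [hu, hv, hps]; ring⟩
  have hu'_odd : u' % 2 = 1 := by
    by_contra hh
    have h0 : u' % 2 = 0 := by omega
    obtain ⟨v, hv⟩ := Nat.dvd_of_mod_eq_zero h0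
    exact h4 ⟨v, by rw [hu', hv, hps]; ring⟩
  have huu : u < u' := by
    have : 2 ^ m * u < 2 ^ m * u' := by rw [← hu, ← hu']; exact hlt
    exact Nat.lt_of_mul_lt_mul_left this
  obtain ⟨w, hw⟩ : ∃ w, u + 1 = 2 * w := ⟨(u + 1) / 2, by omega⟩
  refine ⟨2 ^ m * (u + 1), ?_, ?_, ⟨w, by rw [hw, hps]; ring⟩⟩
  · rw [hu]; exact mul_lt_mul_of_pos_left (by omega) hpow
  · rw [hu']; exact Nat.mul_le_mul_left _ (by omega)

/-- The coloring function. -/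
def col (p : ℕ × ℕ × ℕ) : ℕ :=
  if Mv p.1 (p.2.2 - 1) = 0 then 0
  else 2 * Mv p.1 (p.2.2 - 1) - 1 + (if p.2.1 ≤ Tv p.1 (p.2.2 - 1) then 0 else 1)

lemma col_lt {k : ℕ} (hk : 0 < k) (p : ℕ × ℕ × ℕ)
    (hp : 1 ≤ p.1 ∧ p.1 ≤ p.2.1 ∧ p.2.1 ≤ p.2.2 ∧ p.2.2 ≤ 2 ^ k ∧ p.1 < p.2.2) :
    col p < 2 * k - 1 := by
  obtain ⟨x, y, z⟩ := p
  obtain ⟨h1, h2, h3, h4, h5⟩ := hp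
  simp only at h1 h2 h3 h4 h5
  simp only [col]
  by_cases hm : Mv x (z - 1) = 0
  · rw [if_pos hm]; omega
  · rw [if_neg hm]
    have hab : x ≤ z - 1 := by omega
    obtain ⟨htmem, htnu⟩ := Tv_spec hab
    rw [Finset.mem_Icc] at htmem
    have htpos : 0 < Tv x (z - 1) := by omega
    have hdvd : 2 ^ Mv x (z - 1) ∣ Tv x (z - 1) := by rw [← htnu]; exact pow_nu2_dvd _
    have hle : 2 ^ Mv x (z - 1) ≤ Tv x (z - 1) := Nat.le_of_dvd htpos hdvd
    have hlt : Tv x (z - 1) < 2 ^ k := by omega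
    have : Mv x (z - 1) < k := by
      by_contra hh
      have : (2 : ℕ) ^ k ≤ 2 ^ Mv x (z - 1) := Nat.pow_le_pow_right (by norm_num) (by omega)
      omega
    split <;> omega

lemma col_ne {p q : ℕ × ℕ × ℕ}
    (hp : 1 ≤ p.1 ∧ p.1 ≤ p.2.1 ∧ p.2.1 ≤ p.2.2 ∧ p.1 < p.2.2)
    (hq : 1 ≤ q.1 ∧ q.1 ≤ q.2.1 ∧ q.2.1 ≤ q.2.2 ∧ q.1 < q.2.2)
    (h : rel2 p q) : col p ≠ col q := by
  obtain ⟨x, y, z⟩ := p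
  obtain ⟨x', y', z'⟩ := q
  obtain ⟨hp1, hp2, hp3, hp5⟩ := hp
  obtain ⟨hq1, hq2, hq3, hq5⟩ := hq
  obtain ⟨hxx', hx'z, hzz', hyx', hzy'⟩ := h
  simp only at *
  have hab : x ≤ z - 1 := by omega
  have hab' : x' ≤ z' - 1 := by omega
  obtain ⟨htmem, htnu⟩ := Tv_spec hab
  obtain ⟨htmem', htnu'⟩ := Tv_spec hab'
  rw [Finset.mem_Icc] at htmem htmem'
  set m := Mv x (z - 1) with hm
  set m' := Mv x' (z' - 1) with hm'
  set t := Tv x (z - 1) with ht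
  set t' := Tv x' (z' - 1) with ht'
  have htpos : 0 < t := by omega
  have htpos' : 0 < t' := by omega
  intro hcol
  simp only [col] at hcol
  by_cases h0 : m = 0
  · by_cases h0' : m' = 0
    · -- both intervals are all-odd singletons
      have hnx : nu2 x = 0 := by
        have := nu2_le_of_mem (Finset.mem_Icc.mpr ⟨le_rfl, hab⟩) (a := x) (b := z - 1)
        omega
      have hox : x % 2 = 1 := odd_of_nu2_zero (by omega) hnx
      have hz : z = x + 1 := by
        by_contra hh
        have hmem2 : x + 1 ∈ Finset.Icc x (z - 1) := Finset.mem_Icc.mpr ⟨by omega, by omega⟩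
        have := nu2_le_of_mem hmem2
        have : nu2 (x + 1) = 0 := by omega
        have := odd_of_nu2_zero (by omega) this
        omega
      have hnx' : nu2 x' = 0 := by
        have := nu2_le_of_mem (Finset.mem_Icc.mpr ⟨le_rfl, hab'⟩) (a := x') (b := z' - 1)
        omega
      have hox' : x' % 2 = 1 := odd_of_nu2_zero (by omega) hnx'
      omega
    · rw [if_pos h0, if_neg h0'] at hcol
      split at hcol <;> omega
  · by_cases h0' : m' = 0
    · rw [if_neg h0, if_pos h0'] at hcol
      split at hcol <;> omega
    · rw [if_neg h0, if_neg h0'] at hcol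
      have hmm : m = m' ∧ ((y ≤ t) ↔ (y' ≤ t')) := by
        by_cases b1 : y ≤ t <;> by_cases b2 : y' ≤ t' <;>
          simp [b1, b2, ← hm, ← hm', ← ht, ← ht'] at hcol <;> constructor <;> first | omega | tauto
      obtain ⟨hmeq, hbit⟩ := hmm
      -- divisibility facts
      have hd1 : 2 ^ m ∣ t := by rw [← htnu]; exact pow_nu2_dvd _
      have hd2 : ¬ 2 ^ (m + 1) ∣ t := by
        rw [← htnu]; exact not_pow_succ_nu2_dvd htpos
      have hd3 : 2 ^ m ∣ t' := by rw [hmeq, ← htnu']; exact pow_nu2_dvd _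
      have hd4 : ¬ 2 ^ (m + 1) ∣ t' := by
        rw [hmeq, ← htnu']; exact not_pow_succ_nu2_dvd htpos'
      have hteq : t = t' := by
        rcases lt_trichotomy t t' with hlt | heq | hlt
        · obtain ⟨c, hc1, hc2, hc3⟩ := between htpos hlt hd1 hd2 hd3 hd4
          have hcpos : 0 < c := by omega
          have hnuc : m + 1 ≤ nu2 c :=
            (Nat.Prime.pow_dvd_iff_le_factorization Nat.prime_two (by omega)).mp hc3
          by_cases hcz : c ≤ z - 1
          · have := nu2_le_of_mem (Finset.mem_Icc.mpr ⟨by omega, hcz⟩ :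
              c ∈ Finset.Icc x (z - 1))
            omega
          · have := nu2_le_of_mem (Finset.mem_Icc.mpr ⟨by omega, by omega⟩ :
              c ∈ Finset.Icc x' (z' - 1))
            omega
        · exact heq
        · obtain ⟨c, hc1, hc2, hc3⟩ := between htpos' hlt hd3 hd4 hd1 hd2
          have hcpos : 0 < c := by omega
          have hnuc : m + 1 ≤ nu2 c :=
            (Nat.Prime.pow_dvd_iff_le_factorization Nat.prime_two (by omega)).mp hc3
          have := nu2_le_of_mem (Finset.mem_Icc.mpr ⟨by omega, by omega⟩ :
            c ∈ Finset.Icc x (z - 1))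
          omega
      -- y ≤ x' ≤ t' = t, but y' ≥ z > z - 1 ≥ t = t'
      have hb1 : y ≤ t := by omega
      have hb2 : ¬ y' ≤ t' := by omega
      tauto

theorem stmt_6 (k : ℕ) (hk : 0 < k) :
    (G2 (2 ^ k)).chromaticNumber ≤ ((2 * k - 1 : ℕ) : ℕ∞) := by
  apply SimpleGraph.Colorable.chromaticNumber_le
  refine ⟨SimpleGraph.Coloring.mk
    (fun a => ⟨col a.1, col_lt hk a.1 ⟨a.2.1, a.2.2.1, a.2.2.2.1, a.2.2.2.2.1, a.2.2.2.2.2⟩⟩)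
    ?_⟩
  rintro a b (h | h : rel2 a.1 b.1 ∨ rel2 b.1 a.1) heq
  · have := col_ne ⟨a.2.1, a.2.2.1, a.2.2.2.1, a.2.2.2.2.2⟩
      ⟨b.2.1, b.2.2.1, b.2.2.2.1, b.2.2.2.2.2⟩ h
    exact this (congrArg Fin.val heq)
  · have := col_ne ⟨b.2.1, b.2.2.1, b.2.2.2.1, b.2.2.2.2.2⟩
      ⟨a.2.1, a.2.2.1, a.2.2.2.1, a.2.2.2.2.2⟩ h
    exact this (congrArg Fin.val heq).symm
end

section
/- In the graph G_2(2m), the subgraph induced on A = {(x,y,z) : z ≤ m} is isomorphic to G_2(m) via the identity, the map (x,y,z) ↦ (x+m, y+m, z+m) is an isomorphism from A onto D = {(x,y,z) : m < x}, and there are no edges between A and D. -/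
theorem stmt_11 (m : ℕ) (hm : 2 ≤ m) :
    -- the identity is an isomorphism between the subgraph induced on
    -- A = {(x,y,z) : z ≤ m} and G₂(m):
    (∀ (a b : V2 (2 * m)) (a' b' : V2 m), a.1 = a'.1 → b.1 = b'.1 →
        ((G2 (2 * m)).Adj a b ↔ (G2 m).Adj a' b')) ∧
    (∀ a' : V2 m, ∃ a : V2 (2 * m), a.1 = a'.1) ∧
    (∀ a : V2 (2 * m), a.1.2.2 ≤ m → ∃ a' : V2 m, a'.1 = a.1) ∧
    -- (x,y,z) ↦ (x+m, y+m, z+m) is an isomorphism from A onto D = {(x,y,z) : m < x}: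
    (∀ (a b ap bp : V2 (2 * m)), a.1.2.2 ≤ m → b.1.2.2 ≤ m →
        ap.1 = (a.1.1 + m, a.1.2.1 + m, a.1.2.2 + m) →
        bp.1 = (b.1.1 + m, b.1.2.1 + m, b.1.2.2 + m) →
        ((G2 (2 * m)).Adj a b ↔ (G2 (2 * m)).Adj ap bp)) ∧
    (∀ a : V2 (2 * m), a.1.2.2 ≤ m →
        ∃ ap : V2 (2 * m), ap.1 = (a.1.1 + m, a.1.2.1 + m, a.1.2.2 + m) ∧ m < ap.1.1) ∧
    (∀ d : V2 (2 * m), m < d.1.1 →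
        ∃ a : V2 (2 * m), a.1.2.2 ≤ m ∧ d.1 = (a.1.1 + m, a.1.2.1 + m, a.1.2.2 + m)) ∧
    -- there are no edges between A and D:
    (∀ a d : V2 (2 * m), a.1.2.2 ≤ m → m < d.1.1 → ¬ (G2 (2 * m)).Adj a d) := by
  refine ⟨?_, ?_, ?_, ?_, ?_, ?_, ?_⟩
  · rintro a b a' b' ha hb
    simp only [G2, rel2, ha, hb]
  · rintro ⟨⟨x, y, z⟩, h⟩
    exact ⟨⟨(x, y, z), by simp at h ⊢; omega⟩, rfl⟩
  · rintro ⟨⟨x, y, z⟩, h⟩ hz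
    exact ⟨⟨(x, y, z), by simp at h hz ⊢; omega⟩, rfl⟩
  · rintro ⟨⟨x, y, z⟩, h1⟩ ⟨⟨x2, y2, z2⟩, h2⟩ ap bp _ _ hap hbp
    simp only [G2, rel2, hap, hbp]
    constructor <;> rintro (h | h) <;> [left; right; left; right] <;>
      simp_all <;> omega
  · rintro ⟨⟨x, y, z⟩, h⟩ hz
    refine ⟨⟨(x + m, y + m, z + m), by simp at h hz ⊢; omega⟩, rfl, ?_⟩
    show m < x + m
    simp at h; omega
  · rintro ⟨⟨x, y, z⟩, h⟩ hx
    simp at h hx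
    refine ⟨⟨(x - m, y - m, z - m), by dsimp only; omega⟩, by dsimp only; omega, ?_⟩
    show (x, y, z) = (x - m + m, y - m + m, z - m + m)
    simp; omega
  · rintro ⟨⟨x, y, z⟩, h1⟩ ⟨⟨x2, y2, z2⟩, h2⟩ hz hx hadj
    simp at h1 h2 hz hx
    rcases hadj with h | h <;> (obtain ⟨a, b, c, d, e⟩ := h; simp_all; omega)
end

section
/- Let τ be a primary irreducible type of width k (a sequence in {1,2,3}^ℓ with equal numbers of ones and twos, no proper nonempty initial segment having equal numbers of ones and twos, starting with a 1), and let X = {x_1 < ... < x_k} and Y = {y_1 < ... < y_k} be finite subsets of ℚ with τ(X, Y) = τ. Then x_i < y_i for all i ∈ [k], and x_{i+1} ≤ y_i for all i ∈ [k-1]. -/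
/-- The order type `τ(X, Y)` of a pair of finite sets: listing `X ∪ Y` in
increasing order as `z_1 < … < z_ℓ`, the `i`-th entry is `1` if `z_i ∈ X \ Y`,
`2` if `z_i ∈ Y \ X`, and `3` if `z_i ∈ X ∩ Y`. -/
def orderType {α : Type*} [LinearOrder α] [DecidableEq α] (X Y : Finset α) : List ℕ :=
  ((X ∪ Y).sort (· ≤ ·)).map fun z => if z ∈ X then (if z ∈ Y then 3 else 1) else 2

/-- A finite sequence with entries in `{1,2,3}` is a type iff it has as many
ones as twos. -/
def IsType (τ : List ℕ) : Prop :=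
  (∀ a ∈ τ, a = 1 ∨ a = 2 ∨ a = 3) ∧ τ.count 1 = τ.count 2

/-- A nonempty type is irreducible if it is not the concatenation of two
nonempty types. -/
def IsIrredType (τ : List ℕ) : Prop :=
  τ ≠ [] ∧ ∀ s t : List ℕ, τ = s ++ t → IsType s → IsType t → s = [] ∨ t = []

/-- Every nonempty proper prefix of a primary irreducible type has strictly
more ones than twos. -/
lemma prefix_count (τ : List ℕ) (hτ : IsType τ) (hirr : IsIrredType τ)
    (hprim : τ.head? = some 1) :
    ∀ s t : List ℕ, τ = s ++ t → s ≠ [] → t ≠ [] → s.count 2 < s.count 1 := by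
  intro s
  induction s using List.reverseRecOn with
  | nil => intro t _ hs _; exact absurd rfl hs
  | append_singleton s' a ih =>
    intro t heq hs ht
    by_cases hs' : s' = []
    · subst hs'
      simp only [List.nil_append] at heq ⊢
      have ha : a = 1 := by
        rw [heq] at hprim; simp [List.head?] at hprim
        exact hprim.symm ▸ rfl
      subst ha; simp
    · have heq' : τ = s' ++ (a :: t) := by simpa using heq
      have ih' := ih (a :: t) heq' hs' (by simp)
      have h2 : (s' ++ [a]).count 2 ≤ s'.count 2 + 1 := by
        have := List.count_le_length (a := 2) (l := [a])
        simp only [List.count_append]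
        simp at this; omega
      have h1 : s'.count 1 ≤ (s' ++ [a]).count 1 := by
        simp [List.count_append]
      have hle : (s' ++ [a]).count 2 ≤ (s' ++ [a]).count 1 := by omega
      rcases lt_or_eq_of_le hle with h | h
      · exact h
      · exfalso
        have hstype : IsType (s' ++ [a]) :=
          ⟨fun b hb => hτ.1 b (heq ▸ List.mem_append_left _ hb), h.symm⟩
        have httype : IsType t := by
          refine ⟨fun b hb => hτ.1 b (heq ▸ List.mem_append_right _ hb), ?_⟩
          have e1 : τ.count 1 = (s' ++ [a]).count 1 + t.count 1 := by
            rw [heq, List.count_append]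
          have e2 : τ.count 2 = (s' ++ [a]).count 2 + t.count 2 := by
            rw [heq, List.count_append]
          have := hτ.2; omega
        rcases hirr.2 _ _ heq hstype httype with h' | h'
        · exact hs h'
        · exact ht h'

/-- A sorted list splits as the elements satisfying a downward-closed predicate
followed by those that do not. -/
lemma filter_split (p : ℚ → Prop) [DecidablePred p]
    (hdc : ∀ a b : ℚ, p b → a ≤ b → p a) :
    ∀ L : List ℚ, L.Pairwise (· ≤ ·) →
      L.filter (fun z => decide (p z)) ++ L.filter (fun z => decide (¬ p z)) = L := by
  intro L
  induction L with
  | nil => simp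
  | cons a L ih =>
    intro hL
    rw [List.pairwise_cons] at hL
    by_cases hpa : p a
    · simp only [List.filter_cons, hpa, decide_true, if_true]
      simpa [hpa] using congrArg (a :: ·) (ih hL.2)
    · have hnil : L.filter (fun z => decide (p z)) = [] := by
        rw [List.filter_eq_nil_iff]
        intro b hb
        simp only [decide_eq_true_eq]
        exact fun hpb => hpa (hdc a b hpb (hL.1 b hb))
      simp [List.filter_cons, hpa, hnil, List.filter_eq_self.2]
      intro b hb
      exact fun hpb => hpa (hdc a b hpb (hL.1 b hb))

/-- `countP` on the sorted list of a finset equals the cardinality of the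
filtered finset. -/
lemma countP_sort (q : ℚ → Prop) [DecidablePred q] (Z : Finset ℚ) :
    ((Z.sort (· ≤ ·)).countP fun z => decide (q z)) = (Z.filter q).card := by
  rw [(Finset.sort_perm_toList Z (· ≤ ·)).countP_eq (fun z => decide (q z)),
    ← Multiset.coe_countP, Finset.coe_toList, Finset.card_def, Finset.filter_val,
    Multiset.countP_eq_card_filter]

/-- The number of elements of `Z` strictly below (resp. at most) the `i`-th
element of `Z` in increasing order is `i` (resp. `i + 1`). -/
lemma filter_card_index (Z : Finset ℚ) (i : ℕ) (hi : i < (Z.sort (· ≤ ·)).length) :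
    (Z.filter (· < (Z.sort (· ≤ ·))[i])).card = i ∧
    (Z.filter (· ≤ (Z.sort (· ≤ ·))[i])).card = i + 1 := by
  set l := Z.sort (· ≤ ·) with hl
  set c := l[i] with hc
  have hsorted : l.Pairwise (· < ·) := (Finset.sortedLT_sort Z).pairwise
  have hsplit : l = l.take i ++ l.drop i := (List.take_append_drop i l).symm
  have hdrop : l.drop i = c :: l.drop (i + 1) := List.drop_eq_getElem_cons hi
  have hpw : List.Pairwise (· < ·) (l.take i ++ l.drop i) := by rw [← hsplit]; exact hsorted
  rw [List.pairwise_append] at hpw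
  have htake : ∀ a ∈ l.take i, a < c := fun a ha =>
    hpw.2.2 a ha c (by rw [hdrop]; exact List.mem_cons_self (a := c))
  have hdrop' : ∀ b ∈ l.drop (i + 1), c < b := by
    have := hpw.2.1
    rw [hdrop, List.pairwise_cons] at this
    exact this.1
  have htlen : (l.take i).length = i := by
    rw [List.length_take]; omega
  constructor
  · rw [← countP_sort (· < c) Z, ← hl]
    conv_lhs => rw [hsplit]
    rw [List.countP_append, hdrop, List.countP_cons]
    have h1 : (l.take i).countP (fun z => decide (z < c)) = i := by
      rw [List.countP_eq_length.2 (fun a ha => by simpa using htake a ha), htlen]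
    have h2 : (l.drop (i + 1)).countP (fun z => decide (z < c)) = 0 := by
      rw [List.countP_eq_zero]
      intro b hb
      simpa using not_lt_of_gt (hdrop' b hb)
    simp [h1, h2]
  · rw [← countP_sort (· ≤ c) Z, ← hl]
    conv_lhs => rw [hsplit]
    rw [List.countP_append, hdrop, List.countP_cons]
    have h1 : (l.take i).countP (fun z => decide (z ≤ c)) = i := by
      rw [List.countP_eq_length.2 (fun a ha => by simpa using (htake a ha).le), htlen]
    have h2 : (l.drop (i + 1)).countP (fun z => decide (z ≤ c)) = 0 := by
      rw [List.countP_eq_zero]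
      intro b hb
      simpa using hdrop' b hb
    simp [h1, h2]

/-- Key counting lemma: for a downward-closed predicate cutting the union
nontrivially, `Y` has strictly fewer elements satisfying it than `X`. -/
lemma key (X Y : Finset ℚ) (τ : List ℕ) (hτ : IsType τ) (hirr : IsIrredType τ)
    (hprim : τ.head? = some 1) (hXY : orderType X Y = τ)
    (p : ℚ → Prop) [DecidablePred p] (hdc : ∀ a b : ℚ, p b → a ≤ b → p a)
    (hne : ∃ z ∈ X ∪ Y, p z) (hne' : ∃ z ∈ X ∪ Y, ¬ p z) :
    (Y.filter p).card < (X.filter p).card := by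
  classical
  set f : ℚ → ℕ := fun z => if z ∈ X then (if z ∈ Y then 3 else 1) else 2 with hf
  set L := (X ∪ Y).sort (· ≤ ·) with hL
  set s := (L.filter (fun z => decide (p z))).map f with hs
  set t := (L.filter (fun z => decide (¬ p z))).map f with hts
  have heq : τ = s ++ t := by
    rw [← hXY]
    show L.map f = s ++ t
    rw [hs, hts, ← List.map_append, filter_split p hdc L (Finset.pairwise_sort _ _)]
  have hsne : s ≠ [] := by
    obtain ⟨z, hz, hpz⟩ := hne
    apply List.ne_nil_of_mem (a := f z)
    rw [hs]
    exact List.mem_map_of_mem (f := f) (List.mem_filter.2 ⟨(Finset.mem_sort _).2 hz, by simpa⟩)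
  have htne : t ≠ [] := by
    obtain ⟨z, hz, hpz⟩ := hne'
    apply List.ne_nil_of_mem (a := f z)
    rw [hts]
    exact List.mem_map_of_mem (f := f) (List.mem_filter.2 ⟨(Finset.mem_sort _).2 hz, by simpa⟩)
  have hcount := prefix_count τ hτ hirr hprim s t heq hsne htne
  have count_eq : ∀ c : ℕ, ∀ Q : ℚ → Prop, ∀ _ : DecidablePred Q,
      (∀ z : ℚ, f z = c ↔ Q z) →
      s.count c = ((X ∪ Y).filter (fun z => Q z ∧ p z)).card := by
    intro c Q _ hQ
    rw [hs, List.count_eq_countP, List.countP_map, List.countP_filter]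
    rw [← countP_sort (fun z => Q z ∧ p z) (X ∪ Y)]
    apply List.countP_congr
    intro z _
    have hq := hQ z
    by_cases hpz : p z <;> by_cases hc : f z = c <;> simp_all [Function.comp]
  have e1 := count_eq 1 (fun z => z ∈ X ∧ z ∉ Y) inferInstance ?_
  have e2 := count_eq 2 (fun z => z ∉ X) inferInstance ?_
  have e3 := count_eq 3 (fun z => z ∈ X ∧ z ∈ Y) inferInstance ?_
  · have hXid : (X.filter p).card =
        ((X ∪ Y).filter (fun z => (z ∈ X ∧ z ∉ Y) ∧ p z)).card
        + ((X ∪ Y).filter (fun z => (z ∈ X ∧ z ∈ Y) ∧ p z)).card := by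
      rw [← Finset.card_union_of_disjoint]
      · congr 1
        ext z
        simp only [Finset.mem_filter, Finset.mem_union]
        tauto
      · rw [Finset.disjoint_left]
        intro z hz hz'
        simp only [Finset.mem_filter] at hz hz'
        tauto
    have hYid : (Y.filter p).card =
        ((X ∪ Y).filter (fun z => (z ∉ X) ∧ p z)).card
        + ((X ∪ Y).filter (fun z => (z ∈ X ∧ z ∈ Y) ∧ p z)).card := by
      rw [← Finset.card_union_of_disjoint]
      · congr 1
        ext z
        simp only [Finset.mem_filter, Finset.mem_union]
        tauto
      · rw [Finset.disjoint_left]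
        intro z hz hz'
        simp only [Finset.mem_filter] at hz hz'
        tauto
    omega
  · intro z; rw [hf]; by_cases h1 : z ∈ X <;> by_cases h2 : z ∈ Y <;> simp [h1, h2]
  · intro z; rw [hf]; by_cases h1 : z ∈ X <;> by_cases h2 : z ∈ Y <;> simp [h1, h2]
  · intro z; rw [hf]; by_cases h1 : z ∈ X <;> by_cases h2 : z ∈ Y <;> simp [h1, h2]

/-- The minimum of `X ∪ Y` lies in `X \ Y` when the order type is primary. -/
lemma head_min (X Y : Finset ℚ) (τ : List ℕ) (hprim : τ.head? = some 1)
    (hXY : orderType X Y = τ) :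
    ∃ z₀, z₀ ∈ X ∧ z₀ ∉ Y ∧ ∀ w ∈ X ∪ Y, z₀ ≤ w := by
  classical
  have hmap : τ = ((X ∪ Y).sort (· ≤ ·)).map
      (fun z => if z ∈ X then (if z ∈ Y then 3 else 1) else 2) := hXY.symm
  cases hLc : (X ∪ Y).sort (· ≤ ·) with
  | nil => rw [hmap, hLc] at hprim; simp at hprim
  | cons z0 rest =>
    rw [hmap, hLc] at hprim
    simp only [List.map_cons, List.head?_cons, Option.some.injEq] at hprim
    have hz0X : z0 ∈ X ∧ z0 ∉ Y := by
      by_cases h1 : z0 ∈ X <;> by_cases h2 : z0 ∈ Y <;> simp_all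
    refine ⟨z0, hz0X.1, hz0X.2, ?_⟩
    intro w hw
    have hwL : w ∈ z0 :: rest := by rw [← hLc]; exact (Finset.mem_sort _).2 hw
    have hsorted : (z0 :: rest).Pairwise (· ≤ ·) := by
      rw [← hLc]; exact Finset.pairwise_sort _ _
    rw [List.pairwise_cons] at hsorted
    rcases List.mem_cons.1 hwL with h | h
    · exact h ▸ le_refl _
    · exact hsorted.1 w h

theorem stmt_14 (τ : List ℕ) (k : ℕ) (hτ : IsType τ) (hirr : IsIrredType τ)
    (hprim : τ.head? = some 1) (hwidth : τ.count 1 + τ.count 3 = k)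
    (X Y : Finset ℚ) (hX : X.card = k) (hY : Y.card = k)
    (hXY : orderType X Y = τ) :
    (∀ i : ℕ, i < k → ∀ xi yi : ℚ,
        (X.sort (· ≤ ·))[i]? = some xi → (Y.sort (· ≤ ·))[i]? = some yi → xi < yi) ∧
    (∀ i : ℕ, i + 1 < k → ∀ xi yi : ℚ,
        (X.sort (· ≤ ·))[i + 1]? = some xi → (Y.sort (· ≤ ·))[i]? = some yi → xi ≤ yi) := by
  classical
  obtain ⟨z0, hz0X, hz0Y, hz0min⟩ := head_min X Y τ hprim hXY
  have hlX : (X.sort (· ≤ ·)).length = k := by rw [Finset.length_sort]; exact hX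
  have hlY : (Y.sort (· ≤ ·)).length = k := by rw [Finset.length_sort]; exact hY
  constructor
  · intro i hik xi yi hxi hyi
    obtain ⟨hiX, hxival⟩ := List.getElem?_eq_some_iff.1 hxi
    obtain ⟨hiY, hyival⟩ := List.getElem?_eq_some_iff.1 hyi
    have hyiY : yi ∈ Y := (Finset.mem_sort _).1 (List.mem_of_getElem? hyi)
    by_contra hlt
    push_neg at hlt
    have hz0yi : z0 < yi := by
      have h1 : z0 ≤ yi := hz0min yi (Finset.mem_union_right _ hyiY)
      exact lt_of_le_of_ne h1 (fun h => hz0Y (h ▸ hyiY))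
    have hk := key X Y τ hτ hirr hprim hXY (fun z => z < yi)
      (fun a b hb hab => lt_of_le_of_lt hab hb)
      ⟨z0, Finset.mem_union_left _ hz0X, hz0yi⟩
      ⟨yi, Finset.mem_union_right _ hyiY, lt_irrefl yi⟩
    have hYcard : (Y.filter (· < yi)).card = i := by
      have := (filter_card_index Y i hiY).1
      rwa [hyival] at this
    have hXcard : (X.filter (· < xi)).card = i := by
      have := (filter_card_index X i hiX).1
      rwa [hxival] at this
    have hsub : X.filter (· < yi) ⊆ X.filter (· < xi) := by
      intro z hz
      rw [Finset.mem_filter] at hz ⊢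
      exact ⟨hz.1, lt_of_lt_of_le hz.2 hlt⟩
    have := Finset.card_le_card hsub
    omega
  · intro i hik xi yi hxi hyi
    obtain ⟨hiX, hxival⟩ := List.getElem?_eq_some_iff.1 hxi
    obtain ⟨hiY, hyival⟩ := List.getElem?_eq_some_iff.1 hyi
    have hyiY : yi ∈ Y := (Finset.mem_sort _).1 (List.mem_of_getElem? hyi)
    have hxiX : xi ∈ X := (Finset.mem_sort _).1 (List.mem_of_getElem? hxi)
    by_contra hlt
    push_neg at hlt
    have hk := key X Y τ hτ hirr hprim hXY (fun z => z ≤ yi)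
      (fun a b hb hab => le_trans hab hb)
      ⟨yi, Finset.mem_union_right _ hyiY, le_refl yi⟩
      ⟨xi, Finset.mem_union_left _ hxiX, not_le_of_gt hlt⟩
    have hYcard : (Y.filter (· ≤ yi)).card = i + 1 := by
      have := (filter_card_index Y i hiY).2
      rwa [hyival] at this
    have hXcard : (X.filter (· < xi)).card = i + 1 := by
      have := (filter_card_index X (i + 1) hiX).1
      rwa [hxival] at this
    have hsub : X.filter (· ≤ yi) ⊆ X.filter (· < xi) := by
      intro z hz
      rw [Finset.mem_filter] at hz ⊢
      exact ⟨hz.1, lt_of_le_of_lt hz.2 hlt⟩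
    have := Finset.card_le_card hsub
    omega
end
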